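/- For vectors a₃, a₃' ∈ ℝ⁴ spanning a 2-dimensional subspace and any vector w ∈ ℝ⁴, the following norm identity holds: ‖[a₃ : a₃' : [a₃ : a₃' : w]]‖² = ‖[a₃ : a₃' : w]‖² · (‖a₃‖²‖a₃'‖² - (a₃·a₃')²), where [x : y : z] denotes the vector in ℝ⁴ with i-th component Σ_{j,k,l} ε_{ijkl} x_j y_k z_l (the 4-dimensional triple cross product). -/

import Mathlib

open Matrix
open scoped RealInnerProductSpace

/-- The Levi-Civita symbol `ε_{jkli}` on four indices. -/
noncomputable def eps (i j k l : Fin 4) : ℝ :=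
  Matrix.det (Matrix.of
    ![(Pi.single j (1:ℝ) : Fin 4 → ℝ), Pi.single k 1, Pi.single l 1, Pi.single i 1])

/-- The four-dimensional triple cross product `[x : y : z]`. -/
noncomputable def tripleCross (x y z : EuclideanSpace ℝ (Fin 4)) :
    EuclideanSpace ℝ (Fin 4) :=
  WithLp.toLp 2 (fun i => ∑ j, ∑ k, ∑ l, eps i j k l * x j * y k * z l)

theorem det4 (M : Matrix (Fin 4) (Fin 4) ℝ) : M.det =
    M 0 0 * M 1 1 * M 2 2 * M 3 3 - M 0 0 * M 1 1 * M 2 3 * M 3 2 - M 0 0 * M 1 2 * M 2 1 * M 3 3 + M 0 0 * M 1 2 * M 2 3 * M 3 1 + M 0 0 * M 1 3 * M 2 1 * M 3 2 - M 0 0 * M 1 3 * M 2 2 * M 3 1 - M 0 1 * M 1 0 * M 2 2 * M 3 3 + M 0 1 * M 1 0 * M 2 3 * M 3 2 + M 0 1 * M 1 2 * M 2 0 * M 3 3 - M 0 1 * M 1 2 * M 2 3 * M 3 0 - M 0 1 * M 1 3 * M 2 0 * M 3 2 + M 0 1 * M 1 3 * M 2 2 * M 3 0 + M 0 2 * M 1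 0 * M 2 1 * M 3 3 - M 0 2 * M 1 0 * M 2 3 * M 3 1 - M 0 2 * M 1 1 * M 2 0 * M 3 3 + M 0 2 * M 1 1 * M 2 3 * M 3 0 + M 0 2 * M 1 3 * M 2 0 * M 3 1 - M 0 2 * M 1 3 * M 2 1 * M 3 0 - M 0 3 * M 1 0 * M 2 1 * M 3 2 + M 0 3 * M 1 0 * M 2 2 * M 3 1 + M 0 3 * M 1 1 * M 2 0 * M 3 2 - M 0 3 * M 1 1 * M 2 2 * M 3 0 - M 0 3 * M 1 2 * M 2 0 * M 3 1 + M 0 3 * M 1 2 * M 2 1 * M 3 0 := by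
  rw [Matrix.det_succ_row_zero]
  simp [Fin.sum_univ_succ, Matrix.det_fin_three, Matrix.submatrix, Fin.succAbove, show (Fin.succ 2 : Fin 4) = 3 from rfl, show (Fin.castSucc 2 : Fin 4) = 2 from rfl,
    show ((3:Fin 4):ℕ) = 3 from rfl, show ((2:Fin 4):ℕ) = 2 from rfl, show ((1:Fin 4):ℕ) = 1 from rfl, show ((0:Fin 4):ℕ) = 0 from rfl]
  ring

theorem eps_jk (i j l : Fin 4) : eps i j j l = 0 :=
  Matrix.det_zero_of_row_eq (i := 0) (j := 1) (by decide) rfl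
theorem eps_jl (i j k : Fin 4) : eps i j k j = 0 :=
  Matrix.det_zero_of_row_eq (i := 0) (j := 2) (by decide) rfl
theorem eps_ji (i k l : Fin 4) : eps i i k l = 0 :=
  Matrix.det_zero_of_row_eq (i := 0) (j := 3) (by decide) rfl
theorem eps_kl (i j k : Fin 4) : eps i j k k = 0 :=
  Matrix.det_zero_of_row_eq (i := 1) (j := 2) (by decide) rfl
theorem eps_ki (i j l : Fin 4) : eps i j i l = 0 :=
  Matrix.det_zero_of_row_eq (i := 1) (j := 3) (by decide) rfl
theorem eps_li (i j k : Fin 4) : eps i j k i = 0 :=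
  Matrix.det_zero_of_row_eq (i := 2) (j := 3) (by decide) rfl

theorem epsv_3012 : eps 3 0 1 2 = 1 := by
  norm_num [eps, det4, Pi.single_apply, Fin.ext_iff, Matrix.vecHead, Matrix.vecTail, Function.comp,
    show ((3:Fin 4):ℕ) = 3 from rfl, show ((2:Fin 4):ℕ) = 2 from rfl, show ((1:Fin 4):ℕ) = 1 from rfl, show ((0:Fin 4):ℕ) = 0 from rfl]
  simp [Matrix.cons_val]

theorem epsv_2013 : eps 2 0 1 3 = -1 := by
  norm_num [eps, det4, Pi.single_apply, Fin.ext_iff, Matrix.vecHead, Matrix.vecTail, Function.comp,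
    show ((3:Fin 4):ℕ) = 3 from rfl, show ((2:Fin 4):ℕ) = 2 from rfl, show ((1:Fin 4):ℕ) = 1 from rfl, show ((0:Fin 4):ℕ) = 0 from rfl]
  simp [Matrix.cons_val]

theorem epsv_3021 : eps 3 0 2 1 = -1 := by
  norm_num [eps, det4, Pi.single_apply, Fin.ext_iff, Matrix.vecHead, Matrix.vecTail, Function.comp,
    show ((3:Fin 4):ℕ) = 3 from rfl, show ((2:Fin 4):ℕ) = 2 from rfl, show ((1:Fin 4):ℕ) = 1 from rfl, show ((0:Fin 4):ℕ) = 0 from rfl]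
  simp [Matrix.cons_val]

theorem epsv_1023 : eps 1 0 2 3 = 1 := by
  norm_num [eps, det4, Pi.single_apply, Fin.ext_iff, Matrix.vecHead, Matrix.vecTail, Function.comp,
    show ((3:Fin 4):ℕ) = 3 from rfl, show ((2:Fin 4):ℕ) = 2 from rfl, show ((1:Fin 4):ℕ) = 1 from rfl, show ((0:Fin 4):ℕ) = 0 from rfl]
  simp [Matrix.cons_val]

theorem epsv_2031 : eps 2 0 3 1 = 1 := by
  norm_num [eps, det4, Pi.single_apply, Fin.ext_iff, Matrix.vecHead, Matrix.vecTail, Function.comp,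
    show ((3:Fin 4):ℕ) = 3 from rfl, show ((2:Fin 4):ℕ) = 2 from rfl, show ((1:Fin 4):ℕ) = 1 from rfl, show ((0:Fin 4):ℕ) = 0 from rfl]
  simp [Matrix.cons_val]

theorem epsv_1032 : eps 1 0 3 2 = -1 := by
  norm_num [eps, det4, Pi.single_apply, Fin.ext_iff, Matrix.vecHead, Matrix.vecTail, Function.comp,
    show ((3:Fin 4):ℕ) = 3 from rfl, show ((2:Fin 4):ℕ) = 2 from rfl, show ((1:Fin 4):ℕ) = 1 from rfl, show ((0:Fin 4):ℕ) = 0 from rfl]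
  simp [Matrix.cons_val]

theorem epsv_3102 : eps 3 1 0 2 = -1 := by
  norm_num [eps, det4, Pi.single_apply, Fin.ext_iff, Matrix.vecHead, Matrix.vecTail, Function.comp,
    show ((3:Fin 4):ℕ) = 3 from rfl, show ((2:Fin 4):ℕ) = 2 from rfl, show ((1:Fin 4):ℕ) = 1 from rfl, show ((0:Fin 4):ℕ) = 0 from rfl]
  simp [Matrix.cons_val]

theorem epsv_2103 : eps 2 1 0 3 = 1 := by
  norm_num [eps, det4, Pi.single_apply, Fin.ext_iff, Matrix.vecHead, Matrix.vecTail, Function.comp,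
    show ((3:Fin 4):ℕ) = 3 from rfl, show ((2:Fin 4):ℕ) = 2 from rfl, show ((1:Fin 4):ℕ) = 1 from rfl, show ((0:Fin 4):ℕ) = 0 from rfl]
  simp [Matrix.cons_val]

theorem epsv_3120 : eps 3 1 2 0 = 1 := by
  norm_num [eps, det4, Pi.single_apply, Fin.ext_iff, Matrix.vecHead, Matrix.vecTail, Function.comp,
    show ((3:Fin 4):ℕ) = 3 from rfl, show ((2:Fin 4):ℕ) = 2 from rfl, show ((1:Fin 4):ℕ) = 1 from rfl, show ((0:Fin 4):ℕ) = 0 from rfl]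
  simp [Matrix.cons_val]

theorem epsv_0123 : eps 0 1 2 3 = -1 := by
  norm_num [eps, det4, Pi.single_apply, Fin.ext_iff, Matrix.vecHead, Matrix.vecTail, Function.comp,
    show ((3:Fin 4):ℕ) = 3 from rfl, show ((2:Fin 4):ℕ) = 2 from rfl, show ((1:Fin 4):ℕ) = 1 from rfl, show ((0:Fin 4):ℕ) = 0 from rfl]
  simp [Matrix.cons_val]

theorem epsv_2130 : eps 2 1 3 0 = -1 := by
  norm_num [eps, det4, Pi.single_apply, Fin.ext_iff, Matrix.vecHead, Matrix.vecTail, Function.comp,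
    show ((3:Fin 4):ℕ) = 3 from rfl, show ((2:Fin 4):ℕ) = 2 from rfl, show ((1:Fin 4):ℕ) = 1 from rfl, show ((0:Fin 4):ℕ) = 0 from rfl]
  simp [Matrix.cons_val]

theorem epsv_0132 : eps 0 1 3 2 = 1 := by
  norm_num [eps, det4, Pi.single_apply, Fin.ext_iff, Matrix.vecHead, Matrix.vecTail, Function.comp,
    show ((3:Fin 4):ℕ) = 3 from rfl, show ((2:Fin 4):ℕ) = 2 from rfl, show ((1:Fin 4):ℕ) = 1 from rfl, show ((0:Fin 4):ℕ) = 0 from rfl]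
  simp [Matrix.cons_val]

theorem epsv_3201 : eps 3 2 0 1 = 1 := by
  norm_num [eps, det4, Pi.single_apply, Fin.ext_iff, Matrix.vecHead, Matrix.vecTail, Function.comp,
    show ((3:Fin 4):ℕ) = 3 from rfl, show ((2:Fin 4):ℕ) = 2 from rfl, show ((1:Fin 4):ℕ) = 1 from rfl, show ((0:Fin 4):ℕ) = 0 from rfl]
  simp [Matrix.cons_val]

theorem epsv_1203 : eps 1 2 0 3 = -1 := by
  norm_num [eps, det4, Pi.single_apply, Fin.ext_iff, Matrix.vecHead, Matrix.vecTail, Function.comp,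
    show ((3:Fin 4):ℕ) = 3 from rfl, show ((2:Fin 4):ℕ) = 2 from rfl, show ((1:Fin 4):ℕ) = 1 from rfl, show ((0:Fin 4):ℕ) = 0 from rfl]
  simp [Matrix.cons_val]

theorem epsv_3210 : eps 3 2 1 0 = -1 := by
  norm_num [eps, det4, Pi.single_apply, Fin.ext_iff, Matrix.vecHead, Matrix.vecTail, Function.comp,
    show ((3:Fin 4):ℕ) = 3 from rfl, show ((2:Fin 4):ℕ) = 2 from rfl, show ((1:Fin 4):ℕ) = 1 from rfl, show ((0:Fin 4):ℕ) = 0 from rfl]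
  simp [Matrix.cons_val]

theorem epsv_0213 : eps 0 2 1 3 = 1 := by
  norm_num [eps, det4, Pi.single_apply, Fin.ext_iff, Matrix.vecHead, Matrix.vecTail, Function.comp,
    show ((3:Fin 4):ℕ) = 3 from rfl, show ((2:Fin 4):ℕ) = 2 from rfl, show ((1:Fin 4):ℕ) = 1 from rfl, show ((0:Fin 4):ℕ) = 0 from rfl]
  simp [Matrix.cons_val]

theorem epsv_1230 : eps 1 2 3 0 = 1 := by
  norm_num [eps, det4, Pi.single_apply, Fin.ext_iff, Matrix.vecHead, Matrix.vecTail, Function.comp,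
    show ((3:Fin 4):ℕ) = 3 from rfl, show ((2:Fin 4):ℕ) = 2 from rfl, show ((1:Fin 4):ℕ) = 1 from rfl, show ((0:Fin 4):ℕ) = 0 from rfl]
  simp [Matrix.cons_val]

theorem epsv_0231 : eps 0 2 3 1 = -1 := by
  norm_num [eps, det4, Pi.single_apply, Fin.ext_iff, Matrix.vecHead, Matrix.vecTail, Function.comp,
    show ((3:Fin 4):ℕ) = 3 from rfl, show ((2:Fin 4):ℕ) = 2 from rfl, show ((1:Fin 4):ℕ) = 1 from rfl, show ((0:Fin 4):ℕ) = 0 from rfl]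
  simp [Matrix.cons_val]

theorem epsv_2301 : eps 2 3 0 1 = -1 := by
  norm_num [eps, det4, Pi.single_apply, Fin.ext_iff, Matrix.vecHead, Matrix.vecTail, Function.comp,
    show ((3:Fin 4):ℕ) = 3 from rfl, show ((2:Fin 4):ℕ) = 2 from rfl, show ((1:Fin 4):ℕ) = 1 from rfl, show ((0:Fin 4):ℕ) = 0 from rfl]
  simp [Matrix.cons_val]

theorem epsv_1302 : eps 1 3 0 2 = 1 := by
  norm_num [eps, det4, Pi.single_apply, Fin.ext_iff, Matrix.vecHead, Matrix.vecTail, Function.comp,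
    show ((3:Fin 4):ℕ) = 3 from rfl, show ((2:Fin 4):ℕ) = 2 from rfl, show ((1:Fin 4):ℕ) = 1 from rfl, show ((0:Fin 4):ℕ) = 0 from rfl]
  simp [Matrix.cons_val]

theorem epsv_2310 : eps 2 3 1 0 = 1 := by
  norm_num [eps, det4, Pi.single_apply, Fin.ext_iff, Matrix.vecHead, Matrix.vecTail, Function.comp,
    show ((3:Fin 4):ℕ) = 3 from rfl, show ((2:Fin 4):ℕ) = 2 from rfl, show ((1:Fin 4):ℕ) = 1 from rfl, show ((0:Fin 4):ℕ) = 0 from rfl]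
  simp [Matrix.cons_val]

theorem epsv_0312 : eps 0 3 1 2 = -1 := by
  norm_num [eps, det4, Pi.single_apply, Fin.ext_iff, Matrix.vecHead, Matrix.vecTail, Function.comp,
    show ((3:Fin 4):ℕ) = 3 from rfl, show ((2:Fin 4):ℕ) = 2 from rfl, show ((1:Fin 4):ℕ) = 1 from rfl, show ((0:Fin 4):ℕ) = 0 from rfl]
  simp [Matrix.cons_val]

theorem epsv_1320 : eps 1 3 2 0 = -1 := by
  norm_num [eps, det4, Pi.single_apply, Fin.ext_iff, Matrix.vecHead, Matrix.vecTail, Function.comp,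
    show ((3:Fin 4):ℕ) = 3 from rfl, show ((2:Fin 4):ℕ) = 2 from rfl, show ((1:Fin 4):ℕ) = 1 from rfl, show ((0:Fin 4):ℕ) = 0 from rfl]
  simp [Matrix.cons_val]

theorem epsv_0321 : eps 0 3 2 1 = 1 := by
  norm_num [eps, det4, Pi.single_apply, Fin.ext_iff, Matrix.vecHead, Matrix.vecTail, Function.comp,
    show ((3:Fin 4):ℕ) = 3 from rfl, show ((2:Fin 4):ℕ) = 2 from rfl, show ((1:Fin 4):ℕ) = 1 from rfl, show ((0:Fin 4):ℕ) = 0 from rfl]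
  simp [Matrix.cons_val]

theorem stmt13 (a₃ a₃' w : EuclideanSpace ℝ (Fin 4))
    (hli : LinearIndependent ℝ ![a₃, a₃']) :
    ‖tripleCross a₃ a₃' (tripleCross a₃ a₃' w)‖ ^ 2
      = ‖tripleCross a₃ a₃' w‖ ^ 2
        * (‖a₃‖ ^ 2 * ‖a₃'‖ ^ 2 - ⟪a₃, a₃'⟫ ^ 2) := by
  have hn : ∀ x : EuclideanSpace ℝ (Fin 4), ‖x‖^2 = x 0 * x 0 + x 1 * x 1 + x 2 * x 2 + x 3 * x 3 := by
    intro x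
    rw [← real_inner_self_eq_norm_sq, PiLp.inner_apply]
    simp [Fin.sum_univ_four]
    ring
  rw [hn, hn, hn, hn, PiLp.inner_apply]
  simp only [tripleCross, Fin.sum_univ_four, RCLike.inner_apply, conj_trivial,
    eps_jk, eps_jl, eps_ji, eps_kl, eps_ki, eps_li, epsv_3012, epsv_2013, epsv_3021, epsv_1023, epsv_2031, epsv_1032, epsv_3102, epsv_2103, epsv_3120, epsv_0123, epsv_2130, epsv_0132, epsv_3201, epsv_1203, epsv_3210, epsv_0213, epsv_1230, epsv_0231, epsv_2301, epsv_1302, epsv_2310, epsv_0312, epsv_1320, epsv_0321,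
    zero_mul, mul_zero, one_mul, mul_one, neg_mul, mul_neg, neg_neg, add_zero, zero_add]
  ring
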